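/- Let x* be a sparsest solution with support S and active index set I for the constraints Bx ≤ b. Assume the residual satisfies ‖y − Ax*‖₂ < ε, the stacked matrix [A_S; B_{I,S}] has trivial null space, and Null(B_S) ≠ {0}. Then there are infinitely many sparsest solutions with the same support S as x*. -/

import Mathlib

open Matrix Finset

/-- The ℓ₂ norm of a finite real vector. -/
noncomputable def l2 {ι : Type*} [Fintype ι] (v : ι → ℝ) : ℝ := Real.sqrt (∑ i, v i ^ 2)

/-- The ℓ₀ "norm": number of nonzero components. -/
noncomputable def l0 {n : ℕ} (x : Fin n → ℝ) : ℕ :=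
  (Finset.univ.filter fun i => x i ≠ 0).card

/-- The support of a vector as a finset. -/
noncomputable def spt {n : ℕ} (x : Fin n → ℝ) : Finset (Fin n) :=
  Finset.univ.filter fun i => x i ≠ 0

/-- Membership in the feasible set T = {x : ‖y - Ax‖₂ ≤ ε, Bx ≤ b}. -/
def feasible {m l n : ℕ} (A : Matrix (Fin m) (Fin n) ℝ) (B : Matrix (Fin l) (Fin n) ℝ)
    (y : Fin m → ℝ) (b : Fin l → ℝ) (ε : ℝ) (x : Fin n → ℝ) : Prop :=
  l2 (y - A.mulVec x) ≤ ε ∧ ∀ i, B.mulVec x i ≤ b i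

/-- x is a sparsest solution: feasible and minimizing ‖·‖₀ over T. -/
noncomputable def sparsest {m l n : ℕ} (A : Matrix (Fin m) (Fin n) ℝ)
    (B : Matrix (Fin l) (Fin n) ℝ) (y : Fin m → ℝ) (b : Fin l → ℝ) (ε : ℝ)
    (x : Fin n → ℝ) : Prop :=
  feasible A B y b ε x ∧ ∀ z, feasible A B y b ε z → l0 x ≤ l0 z

/-- Column submatrix indexed by S. -/
def colSub {m n : ℕ} (A : Matrix (Fin m) (Fin n) ℝ) (S : Finset (Fin n)) :
    Matrix (Fin m) {j // j ∈ S} ℝ :=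
  A.submatrix id Subtype.val

/-- Row-and-column submatrix with rows in I and columns in S. -/
def rcSub {l n : ℕ} (B : Matrix (Fin l) (Fin n) ℝ) (I : Finset (Fin l))
    (S : Finset (Fin n)) : Matrix {i // i ∈ I} {j // j ∈ S} ℝ :=
  B.submatrix Subtype.val Subtype.val

/-- Active index set of the constraints Bx ≤ b at x. -/
noncomputable def activeSet {l n : ℕ} (B : Matrix (Fin l) (Fin n) ℝ) (b : Fin l → ℝ)
    (x : Fin n → ℝ) : Finset (Fin l) :=
  Finset.univ.filter fun i => B.mulVec x i = b i


lemma l2_eq_norm {ι : Type*} [Fintype ι] (v : ι → ℝ) :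
    l2 v = ‖(WithLp.equiv 2 (ι → ℝ)).symm v‖ := by
  rw [EuclideanSpace.norm_eq]
  simp [l2, sq_abs]

lemma l2_nonneg {ι : Type*} [Fintype ι] (v : ι → ℝ) : 0 ≤ l2 v :=
  Real.sqrt_nonneg _

lemma l2_add_le {ι : Type*} [Fintype ι] (u w : ι → ℝ) : l2 (u + w) ≤ l2 u + l2 w := by
  simp only [l2_eq_norm, WithLp.equiv_symm_apply, WithLp.toLp_add]
  exact norm_add_le _ _

lemma l2_smul {ι : Type*} [Fintype ι] (t : ℝ) (w : ι → ℝ) : l2 (t • w) = |t| * l2 w := by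
  simp only [l2_eq_norm, WithLp.equiv_symm_apply, WithLp.toLp_smul]
  rw [norm_smul, Real.norm_eq_abs]

/-- case C2: strict residual, Null([A_S; B_{I,S}]) = {0} and
Null(B_S) ≠ {0} give infinitely many sparsest solutions with the same support. -/
theorem stmt4 {m l n : ℕ} (A : Matrix (Fin m) (Fin n) ℝ) (B : Matrix (Fin l) (Fin n) ℝ)
    (y : Fin m → ℝ) (b : Fin l → ℝ) (ε : ℝ) (hε : 0 < ε)
    (xs : Fin n → ℝ) (hxs : sparsest A B y b ε xs)
    (hres : l2 (y - A.mulVec xs) < ε)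
    (S : Finset (Fin n)) (hS : S = spt xs)
    (I : Finset (Fin l)) (hI : I = activeSet B b xs)
    (hker : ∀ d : {j // j ∈ S} → ℝ,
      (colSub A S).mulVec d = 0 → (rcSub B I S).mulVec d = 0 → d = 0)
    (hBS : ∃ μ : {j // j ∈ S} → ℝ, μ ≠ 0 ∧ (colSub B S).mulVec μ = 0) :
    {z : Fin n → ℝ | sparsest A B y b ε z ∧ spt z = S}.Infinite := by
  obtain ⟨μ, hμ, hBμ⟩ := hBS
  set v : Fin n → ℝ := fun j => if h : j ∈ S then μ ⟨j, h⟩ else 0 with hv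
  have hv0 : ∃ j, v j ≠ 0 := by
    by_contra h
    push_neg at h
    apply hμ
    funext j
    have := h j.val
    simpa [hv, j.prop] using this
  have hvout : ∀ j, j ∉ S → v j = 0 := by
    intro j hj; simp [hv, hj]
  have hBv : B.mulVec v = 0 := by
    funext i
    have h0 := congrFun hBμ i
    simp only [colSub, Matrix.mulVec, dotProduct, Matrix.submatrix_apply, id_eq,
      Pi.zero_apply] at h0 ⊢
    rw [← Finset.sum_subset (Finset.subset_univ S)
      (fun j _ hj => by rw [hvout j hj, mul_zero])]
    rw [← Finset.sum_attach S fun j => B i j * v j]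
    rw [← h0, ← Finset.univ_eq_attach]
    refine Finset.sum_congr rfl fun j _ => ?_
    simp [hv, j.prop]
  have hxsout : ∀ j, j ∉ S → xs j = 0 := by
    intro j hj
    rw [hS] at hj
    simpa [spt] using hj
  set r := y - A.mulVec xs with hr
  set c := l2 (A.mulVec v) with hc
  have hc0 : 0 ≤ c := l2_nonneg _
  set δ := (ε - l2 r) / (c + 1) with hδ
  have hδ0 : 0 < δ := div_pos (by linarith) (by linarith)
  have key : ∀ t ∈ Set.Ioo (0:ℝ) δ,
      sparsest A B y b ε (xs + t • v) ∧ spt (xs + t • v) = S := by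
    intro t ht
    obtain ⟨ht0, htδ⟩ := ht
    set z := xs + t • v with hz
    have hAz : A.mulVec z = A.mulVec xs + t • A.mulVec v := by
      rw [hz, Matrix.mulVec_add, Matrix.mulVec_smul]
    have hresz : l2 (y - A.mulVec z) < ε := by
      have heq : y - A.mulVec z = r + (-t) • A.mulVec v := by
        rw [hAz, hr, neg_smul]; abel
      rw [heq]
      have h1 : l2 (r + (-t) • A.mulVec v) ≤ l2 r + l2 ((-t) • A.mulVec v) :=
        l2_add_le _ _
      rw [l2_smul, abs_neg, abs_of_pos ht0, ← hc] at h1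
      have h2 : t * c < δ * (c + 1) := by nlinarith
      have h3 : δ * (c + 1) = ε - l2 r := by
        rw [hδ, div_mul_cancel₀]; linarith
      linarith
    have hBz : B.mulVec z = B.mulVec xs := by
      rw [hz, Matrix.mulVec_add, Matrix.mulVec_smul, hBv, smul_zero, add_zero]
    have hfeasz : feasible A B y b ε z :=
      ⟨le_of_lt hresz, fun i => by rw [hBz]; exact hxs.1.2 i⟩
    have hsub : spt z ⊆ S := by
      intro j hj
      by_contra hjS
      have : z j = 0 := by
        rw [hz]; simp [hxsout j hjS, hvout j hjS]
      simp [spt, this] at hj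
    have hl0xs : l0 xs = S.card := by rw [hS]; rfl
    have hl0z : l0 z = (spt z).card := rfl
    have hge : S.card ≤ (spt z).card := by
      have := hxs.2 z hfeasz
      rw [hl0xs, hl0z] at this
      exact this
    have hspt : spt z = S :=
      Finset.eq_of_subset_of_card_le hsub hge
    have hl0eq : l0 z = l0 xs := by rw [hl0z, hspt, hl0xs]
    exact ⟨⟨hfeasz, fun w hw => hl0eq ▸ hxs.2 w hw⟩, hspt⟩
  have hinj : Set.InjOn (fun t : ℝ => xs + t • v) (Set.Ioo 0 δ) := by
    obtain ⟨j, hj⟩ := hv0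
    intro t1 _ t2 _ h
    have := congrFun h j
    simp only [Pi.add_apply, Pi.smul_apply, smul_eq_mul] at this
    have : t1 * v j = t2 * v j := by linarith
    exact mul_right_cancel₀ hj this
  have himg : (fun t : ℝ => xs + t • v) '' (Set.Ioo 0 δ) ⊆
      {z : Fin n → ℝ | sparsest A B y b ε z ∧ spt z = S} := by
    rintro _ ⟨t, ht, rfl⟩
    exact key t ht
  exact Set.Infinite.mono himg ((Set.Ioo_infinite hδ0).image hinj)
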